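/- arXiv:2210.10067 — 2 statements merged into one kernel-verified Lean document; each statement's English description precedes it below -/
import Mathlib

section
/- Let χ < 0, ν > 0, and let (c, u, v) be a traveling wave solution of (TW) with parameters χ, ν. If u has a local minimum at a point x_m, then u(x_m) ≥ (ν + v(x_m))/(ν + 1); if u has a local maximum at x_m, then u(x_m) ≤ (ν + v(x_m))/(ν + 1). -/
open MeasureTheory Filter Set

/-- The kernel `𝒦_ν(z) = (1/(2√ν)) e^{−|z|/√ν}`. -/
noncomputable def Kker (ν z : ℝ) : ℝ := (1 / (2 * Real.sqrt ν)) * Real.exp (-|z| / Real.sqrt ν)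

/-- A traveling wave solution `(c, u, v)` of (TW) with parameters `χ, ν`. -/
def IsTWSolution (χ ν c : ℝ) (u v : ℝ → ℝ) : Prop :=
  ContDiff ℝ 2 u ∧ ContDiff ℝ 2 v ∧
  (∀ x, 0 < u x ∧ u x < 1) ∧ (∀ x, 0 < v x ∧ v x < 1) ∧
  (∀ x, -(c * deriv u x) - deriv (fun y => deriv v y * u y) x
      = (1 / |χ|) * deriv (deriv u) x + u x * (1 - u x)) ∧
  (∀ x, -(ν * deriv (deriv v) x) = u x - v x) ∧
  (∀ x, v x = ∫ y, Kker ν (x - y) * u y) ∧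
  Tendsto u atBot (nhds 1) ∧ Tendsto u atTop (nhds 0)

/-- From `C²`, the derivative is `C¹`. -/
lemma contDiff_deriv_of_two {f : ℝ → ℝ} (hf : ContDiff ℝ 2 f) :
    Differentiable ℝ f ∧ ContDiff ℝ 1 (deriv f) := by
  rw [show (2 : WithTop ℕ∞) = 1 + 1 from rfl] at hf
  obtain ⟨hd, -, hd1⟩ := contDiff_succ_iff_deriv.mp hf
  exact ⟨hd, hd1⟩

/-- Second derivative is nonnegative at a local minimum of a `C²` function. -/
lemma second_deriv_nonneg_of_isLocalMin {f : ℝ → ℝ} {a : ℝ} (hf : ContDiff ℝ 2 f)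
    (hmin : IsLocalMin f a) : 0 ≤ deriv (deriv f) a := by
  by_contra h
  push_neg at h
  obtain ⟨hfd, hfd1⟩ := contDiff_deriv_of_two hf
  have hgd : Differentiable ℝ (deriv f) := hfd1.differentiable one_ne_zero
  have hga : deriv f a = 0 := hmin.deriv_eq_zero
  -- slope of deriv f tends to deriv (deriv f) a < 0
  have hslope : Tendsto (slope (deriv f) a) (nhdsWithin a {a}ᶜ) (nhds (deriv (deriv f) a)) :=
    hasDerivAt_iff_tendsto_slope.mp (hgd a).hasDerivAt
  have hneg : ∀ᶠ x in nhdsWithin a {a}ᶜ, slope (deriv f) a x < 0 :=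
    hslope.eventually (Filter.Tendsto.eventually_lt_const h tendsto_id)
  have hneg' : ∀ᶠ x in nhdsWithin a (Ioi a), deriv f x < 0 := by
    have := nhdsWithin_mono a (fun x (hx : x ∈ Ioi a) => ne_of_gt hx : Ioi a ⊆ {a}ᶜ) hneg
    filter_upwards [this, self_mem_nhdsWithin] with x hx hx'
    have hxa : 0 < x - a := sub_pos.mpr hx'
    have : slope (deriv f) a x = (deriv f x - deriv f a) / (x - a) := by
      simp [slope, div_eq_inv_mul]
    rw [this, hga, sub_zero] at hx
    rcases div_neg_iff.mp hx with h' | h'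
    · linarith [h'.2]
    · exact h'.1
  have hminev : ∀ᶠ x in nhdsWithin a (Ioi a), f a ≤ f x :=
    (hmin.filter_mono (nhdsWithin_le_nhds))
  have hboth : {x | deriv f x < 0 ∧ f a ≤ f x} ∈ nhdsWithin a (Ioi a) := hneg'.and hminev
  obtain ⟨b, hb, hIoc⟩ := mem_nhdsGT_iff_exists_Ioc_subset.mp hboth
  have hab : a < b := hb
  -- f is strictly antitone on [a, b]
  have hanti : StrictAntiOn f (Icc a b) := by
    apply strictAntiOn_of_deriv_neg (convex_Icc a b) (hf.continuous.continuousOn)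
    intro x hx
    rw [interior_Icc] at hx
    exact (hIoc ⟨hx.1, hx.2.le⟩).1
  have h1 : f b < f a := hanti ⟨le_refl a, hab.le⟩ ⟨hab.le, le_refl b⟩ hab
  have h2 : f a ≤ f b := (hIoc ⟨hab, le_refl b⟩).2
  linarith

/-- Second derivative is nonpositive at a local maximum of a `C²` function. -/
lemma second_deriv_nonpos_of_isLocalMax {f : ℝ → ℝ} {a : ℝ} (hf : ContDiff ℝ 2 f)
    (hmax : IsLocalMax f a) : deriv (deriv f) a ≤ 0 := by
  have hneg : ContDiff ℝ 2 (fun x => -f x) := hf.neg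
  have h := second_deriv_nonneg_of_isLocalMin hneg hmax.neg
  have e1 : deriv (fun x => -f x) = fun x => -deriv f x := by
    funext x; exact deriv.neg
  rw [e1] at h
  have e2 : deriv (fun x => -deriv f x) a = -deriv (deriv f) a := deriv.neg
  rw [e2] at h
  linarith

/-- values of `u` at local extrema of a (TW) traveling wave. -/
theorem tw_local_extrema (χ ν c : ℝ) (u v : ℝ → ℝ) (hχ : χ < 0) (hν : 0 < ν)
    (hsol : IsTWSolution χ ν c u v) (xm : ℝ) :
    (IsLocalMin u xm → (ν + v xm) / (ν + 1) ≤ u xm) ∧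
    (IsLocalMax u xm → u xm ≤ (ν + v xm) / (ν + 1)) := by
  obtain ⟨hu2, hv2, hubd, hvbd, heq1, heq2, -, -, -⟩ := hsol
  obtain ⟨hud, -⟩ := contDiff_deriv_of_two hu2
  obtain ⟨hvd, hvd1⟩ := contDiff_deriv_of_two hv2
  have hvdd : Differentiable ℝ (deriv v) := hvd1.differentiable one_ne_zero
  have hχpos : 0 < 1 / |χ| := by
    have : 0 < |χ| := abs_pos.mpr (ne_of_lt hχ)
    positivity
  have hupos : 0 < u xm := (hubd xm).1
  -- product rule for deriv (fun y => deriv v y * u y) at xm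
  have hprod : deriv (fun y => deriv v y * u y) xm
      = deriv (deriv v) xm * u xm + deriv v xm * deriv u xm :=
    ((hvdd xm).hasDerivAt.mul (hud xm).hasDerivAt).deriv
  have key : ∀ hder : deriv u xm = 0,
      -(deriv (deriv v) xm * u xm) = (1 / |χ|) * deriv (deriv u) xm + u xm * (1 - u xm) := by
    intro hder
    have h1 := heq1 xm
    rw [hprod, hder] at h1
    linarith
  have hquot : ν * deriv (deriv v) xm = v xm - u xm := by
    have := heq2 xm; linarith
  constructor
  · intro hmin
    have hder : deriv u xm = 0 := hmin.deriv_eq_zero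
    have hsec : 0 ≤ deriv (deriv u) xm := second_deriv_nonneg_of_isLocalMin hu2 hmin
    have h1 := key hder
    have h2 : u xm * (1 - u xm) ≤ -(deriv (deriv v) xm * u xm) := by
      nlinarith [mul_nonneg hχpos.le hsec]
    rw [div_le_iff₀ (by linarith : (0:ℝ) < ν + 1)]
    nlinarith [mul_le_mul_of_nonneg_left h2 hν.le, mul_pos hupos hν]
  · intro hmax
    have hder : deriv u xm = 0 := hmax.deriv_eq_zero
    have hsec : deriv (deriv u) xm ≤ 0 := second_deriv_nonpos_of_isLocalMax hu2 hmax
    have h1 := key hder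
    have h2 : -(deriv (deriv v) xm * u xm) ≤ u xm * (1 - u xm) := by
      nlinarith [mul_nonpos_of_nonneg_of_nonpos hχpos.le hsec]
    rw [le_div_iff₀ (by linarith : (0:ℝ) < ν + 1)]
    nlinarith [mul_le_mul_of_nonneg_left h2 hν.le, mul_pos hupos hν]
end

section
/- Let a < b, c ∈ ℝ, and let u : (a, b) → ℝ be twice continuously differentiable, nonconstant, with 0 ≤ u(x) ≤ 1 for all x ∈ (a, b), satisfying −c u'(x) − (u(x) u'(x))' = u(x)(1 − u(x)) pointwise on (a, b). If u has a local minimum at a point x̃ ∈ (a, b) and u(x̃) ≠ 1, then u(x̃) = 0. -/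
open MeasureTheory Filter Set

/-- a nonconstant classical solution of the ε = 0 porous medium FKPP
traveling wave equation vanishes at any interior local minimum where it is not 1. -/
theorem pm_no_positive_local_min (a b c : ℝ) (hab : a < b) (u : ℝ → ℝ)
    (hreg : ContDiffOn ℝ 2 u (Set.Ioo a b))
    (hnonconst : ∃ x ∈ Set.Ioo a b, ∃ y ∈ Set.Ioo a b, u x ≠ u y)
    (hbd : ∀ x ∈ Set.Ioo a b, u x ∈ Set.Icc (0 : ℝ) 1)
    (hode : ∀ x ∈ Set.Ioo a b,
      -(c * deriv u x) - deriv (fun y => u y * deriv u y) x = u x * (1 - u x))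
    (xt : ℝ) (hxt : xt ∈ Set.Ioo a b) (hmin : IsLocalMin u xt) (hne : u xt ≠ 1) :
    u xt = 0 := by
  have hopen : IsOpen (Set.Ioo a b) := isOpen_Ioo
  have hmem : Set.Ioo a b ∈ nhds xt := hopen.mem_nhds hxt
  -- u is differentiable on Ioo a b
  have hdiff : DifferentiableOn ℝ u (Set.Ioo a b) :=
    hreg.differentiableOn (by norm_num)
  -- deriv u is C¹ (hence differentiable) on Ioo a b
  have hderivC1 : ContDiffOn ℝ 1 (deriv u) (Set.Ioo a b) :=
    hreg.deriv_of_isOpen hopen (by norm_num)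
  have hderivdiff : DifferentiableOn ℝ (deriv u) (Set.Ioo a b) :=
    hderivC1.differentiableOn (by norm_num)
  have hu_at : DifferentiableAt ℝ u xt := (hdiff xt hxt).differentiableAt hmem
  have hu'_at : DifferentiableAt ℝ (deriv u) xt := (hderivdiff xt hxt).differentiableAt hmem
  -- first derivative vanishes
  have h1 : deriv u xt = 0 := hmin.deriv_eq_zero
  -- second derivative is nonnegative
  set d := deriv (deriv u) xt with hd_def
  have hd : HasDerivAt (deriv u) d xt := hu'_at.hasDerivAt
  have hdnn : 0 ≤ d := by
    by_contra hneg
    push_neg at hneg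
    have hslope : Filter.Tendsto (slope (deriv u) xt) (nhdsWithin xt {xt}ᶜ) (nhds d) :=
      hasDerivAt_iff_tendsto_slope.mp hd
    have hev : ∀ᶠ x in nhdsWithin xt {xt}ᶜ, slope (deriv u) xt x < 0 :=
      hslope.eventually_lt_const hneg
    have hev' : ∀ᶠ x in nhdsWithin xt (Set.Iio xt), slope (deriv u) xt x < 0 :=
      hev.filter_mono (nhdsWithin_mono _ (fun x hx => by
        simp only [Set.mem_compl_iff, Set.mem_singleton_iff]
        exact ne_of_lt hx))
    have hevmin : ∀ᶠ x in nhdsWithin xt (Set.Iio xt), u xt ≤ u x :=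
      hmin.filter_mono nhdsWithin_le_nhds
    have hevmem : ∀ᶠ x in nhdsWithin xt (Set.Iio xt), x ∈ Set.Ioo a b :=
      (hopen.eventually_mem hxt).filter_mono nhdsWithin_le_nhds
    have hall := (hev'.and hevmin).and hevmem
    rw [eventually_iff, mem_nhdsLT_iff_exists_Ioo_subset] at hall
    obtain ⟨l, hl, hsub⟩ := hall
    set x₀ := (l + xt) / 2 with hx₀def
    have hx₀ : x₀ ∈ Set.Ioo l xt := ⟨by simp [hx₀def]; linarith [Set.mem_Iio.mp hl],
      by simp [hx₀def]; linarith [Set.mem_Iio.mp hl]⟩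
    -- deriv u is positive on Ioo x₀ xt
    have hpos : ∀ x ∈ interior (Set.Icc x₀ xt), 0 < deriv u x := by
      intro x hx
      rw [interior_Icc] at hx
      have hx' : x ∈ Set.Ioo l xt := ⟨lt_trans hx₀.1 hx.1, hx.2⟩
      have := (hsub hx').1.1
      rw [slope_def_field, h1] at this
      have hxlt : x - xt < 0 := by linarith [hx.2]
      have := (div_neg_iff.mp this)
      rcases this with ⟨h1', h2'⟩ | ⟨h1', h2'⟩
      · linarith
      · linarith
    have hIccsub : Set.Icc x₀ xt ⊆ Set.Ioo a b := by
      intro x hx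
      rcases eq_or_lt_of_le hx.2 with h | h
      · rwa [h]
      · exact (hsub ⟨lt_of_lt_of_le hx₀.1 hx.1, h⟩).2
    have hcont : ContinuousOn u (Set.Icc x₀ xt) := hreg.continuousOn.mono hIccsub
    have hmono : StrictMonoOn u (Set.Icc x₀ xt) :=
      strictMonoOn_of_deriv_pos (convex_Icc x₀ xt) hcont hpos
    have hlt : u x₀ < u xt :=
      hmono (Set.left_mem_Icc.mpr (le_of_lt hx₀.2)) (Set.right_mem_Icc.mpr (le_of_lt hx₀.2)) hx₀.2
    have : u xt ≤ u x₀ := (hsub hx₀).1.2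
    linarith
  -- compute the derivative of u * u' at xt
  have hderiv_prod : deriv (fun y => u y * deriv u y) xt
      = deriv u xt * deriv u xt + u xt * d := deriv_mul hu_at hu'_at
  have hode' := hode xt hxt
  rw [hderiv_prod, h1] at hode'
  simp only [mul_zero, zero_mul, neg_zero, zero_sub, zero_add] at hode'
  -- bounds
  obtain ⟨h0, h1'⟩ := hbd xt hxt
  have hlhs : -(u xt * d) ≤ 0 := by
    have : 0 ≤ u xt * d := mul_nonneg h0 hdnn
    linarith
  have hrhs : 0 ≤ u xt * (1 - u xt) := mul_nonneg h0 (by linarith)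
  have hzero : u xt * (1 - u xt) = 0 := le_antisymm (by linarith [hode']) hrhs
  rcases mul_eq_zero.mp hzero with h | h
  · exact h
  · exact absurd (by linarith : u xt = 1) hne
end
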